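/- In the truncated model M_k: if a sentence A (containing only the predicate symbol P) satisfies M_k ⊨ A ↔ ∀u □(A → P(u)), then for every n ≤ k, M_k, n ⊨ A if and only if n is even. -/

import Mathlib

namespace PML

/-- Formulas of predicate modal logic, with propositional variables (language L''). -/
inductive Fml : Type
  | verum : Fml
  | falsum : Fml
  | pvar (q : ℕ) : Fml
  | pred (P : ℕ) (args : List ℕ) : Fml
  | neg (A : Fml) : Fml
  | imp (A B : Fml) : Fml
  | all (u : ℕ) (A : Fml) : Fml
  | box (A : Fml) : Fml

namespace Fml

def lor (A B : Fml) : Fml := A.neg.imp B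
def land (A B : Fml) : Fml := (A.imp B.neg).neg
def iff (A B : Fml) : Fml := (A.imp B).land (B.imp A)
def ex (u : ℕ) (A : Fml) : Fml := (Fml.all u A.neg).neg
def boxdot (A : Fml) : Fml := A.box.land A

def boxIter : ℕ → Fml → Fml
  | 0, A => A
  | n + 1, A => (boxIter n A).box

/-- Free variables. -/
def free : Fml → Finset ℕ
  | pred _ args => args.toFinset
  | neg A => A.free
  | imp A B => A.free ∪ B.free
  | all u A => A.free.erase u
  | box A => A.free
  | _ => ∅

/-- Bound variables. -/
def bound : Fml → Finset ℕ
  | neg A => A.bound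
  | imp A B => A.bound ∪ B.bound
  | all u A => insert u A.bound
  | box A => A.bound
  | _ => ∅

/-- Propositional variables occurring in a formula. -/
def pvars : Fml → Finset ℕ
  | pvar q => {q}
  | neg A => A.pvars
  | imp A B => A.pvars ∪ B.pvars
  | all _ A => A.pvars
  | box A => A.pvars
  | _ => ∅

/-- Predicate symbols occurring in a formula. -/
def preds : Fml → Finset ℕ
  | pred P _ => {P}
  | neg A => A.preds
  | imp A B => A.preds ∪ B.preds
  | all _ A => A.preds
  | box A => A.preds
  | _ => ∅

/-- Predicate symbols together with the arity they are used with. -/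
def predSig : Fml → Finset (ℕ × ℕ)
  | pred P args => {(P, args.length)}
  | neg A => A.predSig
  | imp A B => A.predSig ∪ B.predSig
  | all _ A => A.predSig
  | box A => A.predSig
  | _ => ∅

/-- Rename free occurrences of the variable `u` to `v`. -/
def rename : Fml → ℕ → ℕ → Fml
  | pred P args, u, v => pred P (args.map fun x => if x = u then v else x)
  | neg A, u, v => (A.rename u v).neg
  | imp A B, u, v => (A.rename u v).imp (B.rename u v)
  | all w A, u, v => if w = u then all w A else all w (A.rename u v)
  | box A, u, v => (A.rename u v).box
  | A, _, _ => A

/-- Substitution of a formula for a propositional variable. -/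
def psub : Fml → ℕ → Fml → Fml
  | pvar q, p, B => if q = p then B else pvar q
  | neg A, p, B => (A.psub p B).neg
  | imp A C, p, B => (A.psub p B).imp (C.psub p B)
  | all u A, p, B => all u (A.psub p B)
  | box A, p, B => (A.psub p B).box
  | A, _, _ => A

/-- Simultaneous substitution of formulas for all propositional variables. -/
def msub : Fml → (ℕ → Fml) → Fml
  | pvar q, σ => σ q
  | neg A, σ => (A.msub σ).neg
  | imp A C, σ => (A.msub σ).imp (C.msub σ)
  | all u A, σ => all u (A.msub σ)
  | box A, σ => (A.msub σ).box
  | A, _ => A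

/-- Depth-indexed substitution: occurrences of `p` at modal depth `i` are replaced by `σ i`. -/
def dsub : Fml → ℕ → (ℕ → Fml) → Fml
  | pvar q, p, σ => if q = p then σ 0 else pvar q
  | neg A, p, σ => (A.dsub p σ).neg
  | imp A C, p, σ => (A.dsub p σ).imp (C.dsub p σ)
  | all u A, p, σ => all u (A.dsub p σ)
  | box A, p, σ => (A.dsub p (fun i => σ (i + 1))).box
  | A, _, _ => A

/-- `A(p)[B_0,…,B_k]` for a list `[B_0,…,B_k]`. -/
def dsubL (A : Fml) (p : ℕ) (L : List Fml) : Fml := A.dsub p (fun i => L.getD i verum)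

/-- `A^{⊤(n)}`: replace every boxed subformula at modal depth `n` by `⊤`. -/
def eraseT : ℕ → Fml → Fml
  | 0, box _ => verum
  | n + 1, box A => (eraseT n A).box
  | n, neg A => (eraseT n A).neg
  | n, imp A B => (eraseT n A).imp (eraseT n B)
  | n, all u A => all u (eraseT n A)
  | _, A => A

/-- `occursAt p A d`: the propositional variable `p` occurs in `A` at modal depth `d`. -/
def occursAt (p : ℕ) : Fml → ℕ → Prop
  | pvar q, d => q = p ∧ d = 0
  | neg A, d => occursAt p A d
  | imp A B, d => occursAt p A d ∨ occursAt p B d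
  | all _ A, d => occursAt p A d
  | box A, d => ∃ d', d = d' + 1 ∧ occursAt p A d'
  | _, _ => False

/-- `A` is modalized in `p`: no occurrence of `p` at depth `0`. -/
def Modalized (p : ℕ) (A : Fml) : Prop := ¬ occursAt p A 0

/-- Conjunction of a list of formulas. -/
def conj : List Fml → Fml
  | [] => verum
  | A :: L => A.land (conj L)

/-- The canonical fixed-point sequence:
`A_0 := A^{⊤(0)}(p)[⊤]`, `A_{k+1} := A^{⊤(k+1)}(p)[⊤, A_k, …, A_0]`. -/
def fpSeq (p : ℕ) (A : Fml) : ℕ → Fml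
  | 0 => (eraseT 0 A).dsub p (fun _ => verum)
  | n + 1 => (eraseT (n + 1) A).dsub p
      (fun i => match i with
        | 0 => verum
        | j + 1 => fpSeq p A (n - j))
  termination_by k => k
  decreasing_by omega

end Fml

open Fml

/-- Axioms of predicate logic, together with the modal distribution axiom K. -/
inductive Ax : Fml → Prop
  | imp1 (A B : Fml) : Ax (A.imp (B.imp A))
  | imp2 (A B C : Fml) : Ax ((A.imp (B.imp C)).imp ((A.imp B).imp (A.imp C)))
  | contra (A B : Fml) : Ax ((A.neg.imp B.neg).imp (B.imp A))
  | verum : Ax Fml.verum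
  | exfalso (A : Fml) : Ax (Fml.falsum.imp A)
  | negE (A : Fml) : Ax (A.neg.imp (A.imp Fml.falsum))
  | negI (A : Fml) : Ax ((A.imp Fml.falsum).imp A.neg)
  | allE (A : Fml) (u v : ℕ) (h : v ∉ A.bound) : Ax ((Fml.all u A).imp (A.rename u v))
  | allK (A B : Fml) (u : ℕ) :
      Ax ((Fml.all u (A.imp B)).imp ((Fml.all u A).imp (Fml.all u B)))
  | allV (A : Fml) (u : ℕ) (h : u ∉ A.free) : Ax (A.imp (Fml.all u A))
  | k (A B : Fml) : Ax (((A.imp B).box).imp (A.box.imp B.box))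

/-- Hilbert-style provability from the base axioms plus extra axioms `Ext`,
closed under modus ponens, necessitation and generalization. -/
inductive Prf (Ext : Fml → Prop) : Fml → Prop
  | ax {A : Fml} : Ax A → Prf Ext A
  | ext {A : Fml} : Ext A → Prf Ext A
  | mp {A B : Fml} : Prf Ext (A.imp B) → Prf Ext A → Prf Ext B
  | nec {A : Fml} : Prf Ext A → Prf Ext A.box
  | gen {A : Fml} (u : ℕ) : Prf Ext A → Prf Ext (Fml.all u A)

/-- The smallest normal predicate modal logic QK. -/
def QK : Fml → Prop := Prf (fun _ => False)

inductive Ax4 : Fml → Prop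
  | four (A : Fml) : Ax4 (A.box.imp A.box.box)

/-- QK4 : QK plus the axiom 4. -/
def QK4 : Fml → Prop := Prf Ax4

inductive AxL : Fml → Prop
  | lob (A : Fml) : AxL (((A.box.imp A).box).imp A.box)

/-- QGL : QK plus Löb's axiom. -/
def QGL : Fml → Prop := Prf AxL

/-- NQGL : QK4 plus the infinitary rule BL. -/
inductive NQGL : Fml → Prop
  | ax {A : Fml} : Ax A → NQGL A
  | four (A : Fml) : NQGL (A.box.imp A.box.box)
  | mp {A B : Fml} : NQGL (A.imp B) → NQGL A → NQGL B
  | nec {A : Fml} : NQGL A → NQGL A.box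
  | gen {A : Fml} (u : ℕ) : NQGL A → NQGL (Fml.all u A)
  | bl {A : Fml} : (∀ n : ℕ, NQGL ((boxIter (n + 1) Fml.falsum).imp A)) → NQGL A

/-- Σ-formulas. -/
inductive IsSigma : Fml → Prop
  | box (A : Fml) : IsSigma A.box
  | lor {A B : Fml} : IsSigma A → IsSigma B → IsSigma (A.lor B)
  | land {A B : Fml} : IsSigma A → IsSigma B → IsSigma (A.land B)
  | ex {A : Fml} (u : ℕ) : IsSigma A → IsSigma (Fml.ex u A)

/- ## Kripke semantics -/

structure KFrame where
  W : Type
  R : W → W → Prop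
  Dom : Type
  D : W → Set Dom
  Dne : ∀ w, (D w).Nonempty
  mono : ∀ {w w'}, R w w' → D w ⊆ D w'

structure KModel extends KFrame where
  I : W → ℕ → List Dom → Prop
  V : W → ℕ → Prop

def Sat (M : KModel) : Fml → M.W → (ℕ → M.Dom) → Prop
  | .verum, _, _ => True
  | .falsum, _, _ => False
  | .pvar q, w, _ => M.V w q
  | .pred P args, w, ρ => M.I w P (args.map ρ)
  | .neg A, w, ρ => ¬ Sat M A w ρ
  | .imp A B, w, ρ => Sat M A w ρ → Sat M B w ρ
  | .all u A, w, ρ => ∀ a ∈ M.D w, Sat M A w (Function.update ρ u a)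
  | .box A, w, ρ => ∀ v, M.R w v → Sat M A v ρ

/-- Validity in a model. -/
def MVal (M : KModel) (A : Fml) : Prop :=
  ∀ (w : M.W) (ρ : ℕ → M.Dom), (∀ x, ρ x ∈ M.D w) → Sat M A w ρ

/-- Validity on a frame. -/
def FVal (F : KFrame) (A : Fml) : Prop :=
  ∀ (I : F.W → ℕ → List F.Dom → Prop) (V : F.W → ℕ → Prop),
    MVal { toKFrame := F, I := I, V := V } A

/-- Smoryński's model. -/
def MS : KModel where
  W := ℕ
  R := fun m n => n < m
  Dom := ℕ
  D := fun n => {m | n ≤ m}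
  Dne := fun n => ⟨n, le_refl n⟩
  mono := by intro w w' h x hx; simp only [Set.mem_setOf_eq] at *; omega
  I := fun w P L => P = 0 ∧ ∀ m ∈ L, m ≠ w + 1
  V := fun _ _ => False

/-- The finite truncations of Smoryński's model. -/
def Mk (k : ℕ) : KModel where
  W := Fin (k + 1)
  R := fun m n => (n : ℕ) < (m : ℕ)
  Dom := ℕ
  D := fun n => {m | (n : ℕ) ≤ m ∧ m ≤ k + 2}
  Dne := fun n => ⟨(n : ℕ), by simp only [Set.mem_setOf_eq]; have := n.isLt; omega⟩
  mono := by intro w w' h x hx; simp only [Set.mem_setOf_eq] at *; omega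
  I := fun w P L => P = 0 ∧ ∀ m ∈ L, m ≠ (w : ℕ) + 1
  V := fun _ _ => False

/-- `A` contains only the unary predicate symbol `P` (coded `0`) and no propositional variables. -/
def OnlyP (A : Fml) : Prop := A.predSig ⊆ {(0, 1)} ∧ A.pvars = ∅

/-- The atomic formula `P(u)`. -/
def Pat (u : ℕ) : Fml := Fml.pred 0 [u]

/-- `h(F) ≤ n`: there is no chain of `n+1` successive `R`-steps. -/
def HeightLe (F : KFrame) (n : ℕ) : Prop :=
  ∀ c : ℕ → F.W, ¬ ∀ i < n + 1, F.R (c i) (c (i + 1))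

end PML

open PML PML.Fml in
/-- Coincidence lemma: satisfaction depends only on the free variables. -/
theorem sat_coinc (M : KModel) (A : Fml) :
    ∀ (w : M.W) (ρ ρ' : ℕ → M.Dom), (∀ x ∈ A.free, ρ x = ρ' x) →
      (Sat M A w ρ ↔ Sat M A w ρ') := by
  induction A with
  | verum => intro w ρ ρ' h; simp [Sat]
  | falsum => intro w ρ ρ' h; simp [Sat]
  | pvar q => intro w ρ ρ' h; simp [Sat]
  | pred P args =>
    intro w ρ ρ' h
    have : args.map ρ = args.map ρ' :=
      List.map_congr_left fun x hx => h x (by simp [Fml.free, hx])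
    simp only [Sat, this]
  | neg A ih =>
    intro w ρ ρ' h
    simp only [Sat]
    exact not_congr (ih w ρ ρ' h)
  | imp A B ihA ihB =>
    intro w ρ ρ' h
    simp only [Sat]
    exact imp_congr (ihA w ρ ρ' fun x hx => h x (by simp [Fml.free]; exact Or.inl hx))
      (ihB w ρ ρ' fun x hx => h x (by simp [Fml.free]; exact Or.inr hx))
  | all u A ih =>
    intro w ρ ρ' h
    simp only [Sat]
    refine forall₂_congr fun a _ => ih w _ _ fun x hx => ?_
    by_cases hxu : x = u
    · subst hxu; simp [Function.update]
    · simp [Function.update, hxu]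
      exact h x (by simp [Fml.free, Finset.mem_erase, hxu, hx])
  | box A ih =>
    intro w ρ ρ' h
    simp only [Sat]
    exact forall₂_congr fun v _ => ih v ρ ρ' h

open PML PML.Fml in
/-- a fixed point of ∀u □(A → P(u)) in M_k holds exactly at even worlds. -/
theorem stmt14 (k : ℕ) (A : Fml) (hA : OnlyP A) (hsent : A.free = ∅)
    (hfix : MVal (Mk k) (A.iff (Fml.all 0 ((A.imp (Pat 0)).box)))) :
    ∀ n : Fin (k + 1), (Sat (Mk k) A n (fun _ => (n : ℕ)) ↔ Even (n : ℕ)) := by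
  suffices h : ∀ N : ℕ, ∀ n : Fin (k + 1), (n : ℕ) = N →
      ∀ ρ : ℕ → ℕ, (∀ x, ρ x ∈ (Mk k).D n) → (Sat (Mk k) A n ρ ↔ Even (n : ℕ)) by
    intro n
    refine h (n : ℕ) n rfl _ fun x => ?_
    have := n.isLt
    simp only [Mk, Set.mem_setOf_eq]
    show _ ≤ _ ∧ _ ≤ k + 2
    omega
  intro N
  induction N using Nat.strong_induction_on with
  | _ N IH =>
  intro n hn ρ hρ
  have hnk := n.isLt
  have hfb := hfix n ρ hρ
  simp only [Fml.iff, Fml.land, Sat] at hfb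
  push_neg at hfb
  obtain ⟨hAB, hBA⟩ := hfb
  -- the induction hypothesis in convenient form
  have hIH : ∀ v : Fin (k + 1), (v : ℕ) < (n : ℕ) →
      ∀ σ : ℕ → ℕ, (∀ x, σ x ∈ (Mk k).D v) → (Sat (Mk k) A v σ ↔ Even (v : ℕ)) := by
    intro v hv σ hσ
    exact IH (v : ℕ) (hn ▸ hv) v rfl σ hσ
  -- membership facts
  have hDn : ∀ x, (n : ℕ) ≤ ρ x ∧ ρ x ≤ k + 2 := fun x => hρ x
  by_cases heven : Even (n : ℕ)
  · refine iff_of_true ?_ heven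
    apply hBA
    show ∀ a ∈ (Mk k).D n, ∀ v : Fin (k + 1), (v : ℕ) < (n : ℕ) →
      Sat (Mk k) A v (Function.update ρ 0 a) → Sat (Mk k) (Pat 0) v (Function.update ρ 0 a)
    intro a ha v hvR hAv
    simp only [Mk, Set.mem_setOf_eq] at ha
    obtain ⟨a, rfl⟩ : ∃ b : ℕ, b = a := ⟨_, rfl⟩
    replace ha : (n : ℕ) ≤ a ∧ a ≤ k + 2 := ha
    have hupd : ∀ x, Function.update ρ 0 a x ∈ (Mk k).D v := by
      intro x
      simp only [Mk, Set.mem_setOf_eq]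
      by_cases hx : x = 0
      · subst hx; show _ ≤ Function.update ρ 0 a 0 ∧ Function.update ρ 0 a 0 ≤ k + 2; simp only [Function.update_self]; omega
      · show _ ≤ Function.update ρ 0 a x ∧ Function.update ρ 0 a x ≤ k + 2; simp only [Function.update_of_ne hx]
        have := hDn x
        omega
    have hEv : Even (v : ℕ) := (hIH v hvR _ hupd).mp hAv
    -- goal: Sat Pat ...
    show Sat (Mk k) (Pat 0) v (Function.update ρ 0 a)
    simp only [Pat, Sat, Mk, List.map_cons, List.map_nil, Function.update_self,
      List.mem_singleton, forall_eq]
    refine ⟨trivial, ?_⟩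
    rw [Nat.even_iff] at hEv heven
    omega
  · refine iff_of_false ?_ heven
    intro hSatA
    have hB : ∀ a ∈ (Mk k).D n, ∀ v : Fin (k + 1), (v : ℕ) < (n : ℕ) →
        Sat (Mk k) A v (Function.update ρ 0 a) → Sat (Mk k) (Pat 0) v (Function.update ρ 0 a) :=
      hAB hSatA
    have hn1 : 1 ≤ (n : ℕ) := by
      rcases Nat.eq_zero_or_pos (n : ℕ) with h0 | h
      · exact absurd (h0 ▸ Even.zero) heven
      · exact h
    set v : Fin (k + 1) := ⟨(n : ℕ) - 1, by omega⟩ with hv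
    have ha : (n : ℕ) ∈ (Mk k).D n := by
      simp only [Mk, Set.mem_setOf_eq]; show _ ≤ _ ∧ _ ≤ k + 2; omega
    have hvR : (v : ℕ) < (n : ℕ) := by simp only [hv]; omega
    have hupd : ∀ x, Function.update ρ 0 (n : ℕ) x ∈ (Mk k).D v := by
      intro x
      simp only [Mk, Set.mem_setOf_eq, hv]
      by_cases hx : x = 0
      · subst hx; show _ ≤ Function.update ρ 0 (n : ℕ) 0 ∧ Function.update ρ 0 (n : ℕ) 0 ≤ k + 2; simp only [Function.update_self]; omega
      · show _ ≤ Function.update ρ 0 (n : ℕ) x ∧ Function.update ρ 0 (n : ℕ) x ≤ k + 2; simp only [Function.update_of_ne hx]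
        have := hDn x
        omega
    have hvn : (v : ℕ) < (n : ℕ) := by simp only [hv]; omega
    have hEv : Even (v : ℕ) := by
      rw [Nat.even_iff] at heven ⊢
      simp only [hv]
      omega
    have hAv : Sat (Mk k) A v (Function.update ρ 0 (n : ℕ)) :=
      (hIH v hvn _ hupd).mpr hEv
    have hP := hB (n : ℕ) ha v hvR hAv
    simp only [Pat, Sat, Mk, List.map_cons, List.map_nil, Function.update_self,
      List.mem_singleton, forall_eq] at hP
    have : (n : ℕ) ≠ (v : ℕ) + 1 := hP.2
    simp only [hv] at this
    omega
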